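/- Let L = F_{2^l}, q = 2^k with gcd(k,l) = 1, and define ρ : L \ F_2 → L by ρ(x) = x^{q^2+1}/(x^q + x)^{q+1}. Then for b ∈ L, the polynomial x^{q+1} + x + b has exactly one root in L if and only if b = ρ(h) for a (necessarily unique) h ∈ L \ F_2 with Tr_{L/F_2}(h) = 1. -/

import Mathlib

open Finset

set_option linter.unusedSectionVars false
set_option linter.unnecessarySimpa false

namespace OneRootAux

variable {L : Type} [Field L] [Fintype L] [DecidableEq L]

lemma char_two {l : ℕ} (hcard : Fintype.card L = 2 ^ l) : CharP L 2 := by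
  obtain ⟨p, hp⟩ := CharP.exists L
  haveI := hp
  obtain ⟨n, hpn, hc⟩ := FiniteField.card L p
  have hdvd : p ∣ 2 ^ l := by
    rw [hcard] at hc
    exact hc ▸ dvd_pow_self p (by exact_mod_cast n.ne_zero)
  have h2 : p = 2 :=
    (Nat.prime_dvd_prime_iff_eq hpn Nat.prime_two).mp (hpn.dvd_of_dvd_pow hdvd)
  exact h2 ▸ hp

lemma frobl {l : ℕ} (hcard : Fintype.card L = 2 ^ l) (x : L) : x ^ 2 ^ l = x := by
  have := FiniteField.pow_card x
  rwa [hcard] at this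

lemma pow_pow_mul (x : L) (a : ℕ) (hx : x ^ 2 ^ a = x) (m : ℕ) : x ^ 2 ^ (a * m) = x := by
  induction m with
  | zero => simpa using rfl
  | succ m ih =>
      have : 2 ^ (a * (m + 1)) = 2 ^ (a * m) * 2 ^ a := by
        rw [← pow_add]; ring_nf
      rw [this, pow_mul, ih, hx]

lemma pow_pow_mul_one (x : L) (a : ℕ) (hx : x ^ 2 ^ a = 1) (m : ℕ) (hm : 0 < m) :
    x ^ 2 ^ (a * m) = 1 := by
  induction m with
  | zero => omega
  | succ m ih =>
      rcases Nat.eq_zero_or_pos m with hm0 | hm0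
      · subst hm0; simpa using hx
      · have : 2 ^ (a * (m + 1)) = 2 ^ (a * m) * 2 ^ a := by
          rw [← pow_add]; ring_nf
        rw [this, pow_mul, ih hm0, one_pow]

lemma exists_km {k l : ℕ} (hk : 0 < k) (hl : 0 < l) (hgcd : Nat.gcd k l = 1) :
    ∃ m n : ℕ, k * m = 1 + l * n ∧ 0 < m := by
  rcases Nat.lt_or_ge l 2 with h2 | h2
  · have hl1 : l = 1 := by omega
    refine ⟨1, k - 1, ?_, one_pos⟩
    subst hl1; omega
  · obtain ⟨m, -, hm⟩ := Nat.exists_mul_mod_eq_one_of_coprime hgcd h2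
    have hdm := Nat.div_add_mod (k * m) l
    refine ⟨m, k * m / l, by omega, ?_⟩
    rcases Nat.eq_zero_or_pos m with h0 | h0
    · subst h0; simp at hm
    · exact h0

lemma eq_zero_or_one_of_frob_fixed {k l : ℕ} (hk : 0 < k) (hl : 0 < l)
    (hgcd : Nat.gcd k l = 1) (hcard : Fintype.card L = 2 ^ l)
    (x : L) (hx : x ^ 2 ^ k = x) : x = 0 ∨ x = 1 := by
  obtain ⟨m, n, hmn, -⟩ := exists_km hk hl hgcd
  have h1 : x ^ 2 ^ (k * m) = x := pow_pow_mul x k hx m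
  have h2 : x ^ 2 ^ (k * m) = x ^ 2 := by
    rw [hmn]
    have : 2 ^ (1 + l * n) = 2 ^ (l * n) * 2 := by rw [← pow_succ, Nat.add_comm]
    rw [this, pow_mul, pow_pow_mul x l (frobl hcard x) n]
  have hxx : x ^ 2 = x := h2 ▸ h1
  have : x * (x - 1) = 0 := by linear_combination hxx
  rcases mul_eq_zero.mp this with h | h
  · exact Or.inl h
  · exact Or.inr (sub_eq_zero.mp h)

lemma eq_one_of_pow_q_eq_one {k l : ℕ} (hk : 0 < k) (hl : 0 < l)
    (hgcd : Nat.gcd k l = 1) (hcard : Fintype.card L = 2 ^ l) [CharP L 2]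
    (x : L) (hx : x ^ 2 ^ k = 1) : x = 1 := by
  obtain ⟨m, n, hmn, hm⟩ := exists_km hk hl hgcd
  have h1 : x ^ 2 ^ (k * m) = 1 := pow_pow_mul_one x k hx m hm
  have h2 : x ^ 2 ^ (k * m) = x ^ 2 := by
    rw [hmn]
    have : 2 ^ (1 + l * n) = 2 ^ (l * n) * 2 := by rw [← pow_succ, Nat.add_comm]
    rw [this, pow_mul, pow_pow_mul x l (frobl hcard x) n]
  have hxx : x ^ 2 = 1 := h2 ▸ h1
  have htwo : (2 : L) = 0 := by
    have := CharP.cast_eq_zero L 2; exact_mod_cast this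
  have : (x - 1) ^ 2 = 0 := by linear_combination hxx + (1 - x) * htwo
  have := pow_eq_zero_iff (n := 2) (by norm_num) |>.mp this
  exact sub_eq_zero.mp this

lemma frob_ratio_inj {k l : ℕ} (hk : 0 < k) (hl : 0 < l)
    (hgcd : Nat.gcd k l = 1) (hcard : Fintype.card L = 2 ^ l)
    (a b : L) (ha : a ≠ 0) (hb : b ≠ 0) (hab : a ^ 2 ^ k * b = b ^ 2 ^ k * a) : a = b := by
  have hbq : b ^ 2 ^ k ≠ 0 := pow_ne_zero _ hb
  have h1 : (a * b⁻¹) ^ 2 ^ k = a * b⁻¹ := by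
    rw [mul_pow, inv_pow, ← div_eq_mul_inv, ← div_eq_mul_inv, div_eq_div_iff hbq hb]
    linear_combination hab
  rcases eq_zero_or_one_of_frob_fixed hk hl hgcd hcard _ h1 with h | h
  · exact absurd h (by simp [ha, hb])
  · field_simp at h; exact h

lemma exists_pow_q_eq {k l : ℕ} (hk : 0 < k) (hl : 0 < l)
    (hgcd : Nat.gcd k l = 1) (hcard : Fintype.card L = 2 ^ l)
    (c : L) (hc : c ≠ 0) : ∃ h : L, h ≠ 0 ∧ h ^ 2 ^ k = c * h := by
  set f : Lˣ → Lˣ := fun u => u ^ 2 ^ k * u⁻¹ with hf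
  have hinj : Function.Injective f := by
    intro u v huv
    have h2 : (u : L) ^ 2 ^ k * v = (v : L) ^ 2 ^ k * u := by
      have := congrArg (fun w : Lˣ => ((w * u * v : Lˣ) : L)) huv
      simp only [hf, Units.val_mul, Units.val_pow_eq_pow_val, Units.val_inv_eq_inv_val] at this ⊢
      field_simp at this
      linear_combination this
    have := frob_ratio_inj hk hl hgcd hcard (u : L) (v : L) u.ne_zero v.ne_zero h2
    exact Units.ext this
  have hsurj := (Finite.injective_iff_surjective).mp hinj
  obtain ⟨u, hu⟩ := hsurj (Units.mk0 c hc)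
  refine ⟨(u : L), u.ne_zero, ?_⟩
  have := congrArg (fun w : Lˣ => ((w * u : Lˣ) : L)) hu
  simp only [hf, Units.val_mul, Units.val_pow_eq_pow_val, Units.val_inv_eq_inv_val,
    Units.val_mk0] at this
  rw [mul_assoc, inv_mul_cancel₀ u.ne_zero, mul_one] at this
  exact this

/-- The absolute trace. -/
def tr (l : ℕ) (a : L) : L := ∑ j ∈ Finset.range l, a ^ 2 ^ j

lemma tr_add {l : ℕ} [CharP L 2] (a b : L) : tr l (a + b) = tr l a + tr l b := by
  haveI : Fact (Nat.Prime 2) := ⟨Nat.prime_two⟩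
  simp only [tr, ← Finset.sum_add_distrib]
  exact Finset.sum_congr rfl fun j _ => add_pow_char_pow ..

lemma tr_zero {l : ℕ} : tr l (0 : L) = 0 :=
  Finset.sum_eq_zero fun j _ => zero_pow (Nat.two_pow_pos j).ne'

lemma tr_two {l : ℕ} [CharP L 2] (hcard : Fintype.card L = 2 ^ l) (a : L) :
    tr l (a ^ 2) = tr l a := by
  have hstep : tr l (a ^ 2) = ∑ j ∈ Finset.range l, a ^ 2 ^ (j + 1) := by
    refine Finset.sum_congr rfl fun j _ => ?_
    rw [← pow_mul, ← pow_succ']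
  have h1 := Finset.sum_range_succ' (fun j => a ^ 2 ^ j) l
  have h2 := Finset.sum_range_succ (fun j => a ^ 2 ^ j) l
  have hfl : a ^ 2 ^ l = a ^ 2 ^ 0 := by rw [frobl hcard a, pow_zero, pow_one]
  rw [hstep, tr]
  linear_combination h2 - h1 + hfl

lemma tr_pow_q {l : ℕ} [CharP L 2] (hcard : Fintype.card L = 2 ^ l) (k : ℕ) (a : L) :
    tr l (a ^ 2 ^ k) = tr l a := by
  induction k with
  | zero => simp
  | succ k ih =>
      have : a ^ 2 ^ (k + 1) = (a ^ 2 ^ k) ^ 2 := by rw [← pow_mul, pow_succ]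
      rw [this, tr_two hcard, ih]

lemma tr_zero_or_one {l : ℕ} [CharP L 2] (hcard : Fintype.card L = 2 ^ l) (a : L) :
    tr l a = 0 ∨ tr l a = 1 := by
  haveI : Fact (Nat.Prime 2) := ⟨Nat.prime_two⟩
  have hsq : tr l a ^ 2 = tr l (a ^ 2) := by
    simp only [tr, sum_pow_char]
    exact Finset.sum_congr rfl fun j _ => by rw [← pow_mul, ← pow_mul, Nat.mul_comm]
  have hxx : tr l a ^ 2 = tr l a := by rw [hsq, tr_two hcard]
  have : tr l a * (tr l a - 1) = 0 := by linear_combination hxx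
  rcases mul_eq_zero.mp this with h | h
  · exact Or.inl h
  · exact Or.inr (sub_eq_zero.mp h)

lemma tr_exists_one {l : ℕ} (hl : 0 < l) [CharP L 2] (hcard : Fintype.card L = 2 ^ l) :
    ∃ a : L, tr l a = 1 := by
  by_contra hcon
  push_neg at hcon
  have hall : ∀ a : L, tr l a = 0 := fun a =>
    (tr_zero_or_one hcard a).resolve_right (hcon a)
  set f : Polynomial L := ∑ j ∈ Finset.range l, Polynomial.X ^ 2 ^ j with hf
  have hcoeff : f.coeff (2 ^ (l - 1)) = 1 := by
    rw [hf, Polynomial.finset_sum_coeff]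
    have : ∀ j ∈ Finset.range l,
        (Polynomial.X ^ 2 ^ j : Polynomial L).coeff (2 ^ (l - 1)) =
          if j = l - 1 then 1 else 0 := by
      intro j _
      rw [Polynomial.coeff_X_pow]
      congr 1
      simp only [eq_iff_iff]
      constructor
      · intro h; exact (Nat.pow_right_injective (le_refl 2) h).symm
      · intro h; rw [h]
    rw [Finset.sum_congr rfl this, Finset.sum_ite_eq' (Finset.range l) (l - 1) fun _ => (1 : L)]
    simp [Nat.sub_lt hl one_pos]
  have hfne : f ≠ 0 := fun h => by simp [h] at hcoeff
  have hdeg : f.natDegree ≤ 2 ^ (l - 1) := by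
    refine Polynomial.natDegree_sum_le_of_forall_le _ _ fun j hj => ?_
    rw [Polynomial.natDegree_X_pow]
    exact Nat.pow_le_pow_right (by norm_num) (by simp at hj; omega)
  have hroots : ∀ a : L, a ∈ f.roots := by
    intro a
    rw [Polynomial.mem_roots hfne]
    simp only [Polynomial.IsRoot, hf, Polynomial.eval_finset_sum, Polynomial.eval_pow,
      Polynomial.eval_X]
    exact hall a
  have hsub : Finset.univ ⊆ f.roots.toFinset := fun a _ => Multiset.mem_toFinset.mpr (hroots a)
  have hchain : (2 : ℕ) ^ l ≤ 2 ^ (l - 1) := by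
    calc (2 : ℕ) ^ l = Fintype.card L := hcard.symm
    _ = Finset.univ.card := (Finset.card_univ).symm
    _ ≤ f.roots.toFinset.card := Finset.card_le_card hsub
    _ ≤ Multiset.card f.roots := Multiset.toFinset_card_le _
    _ ≤ f.natDegree := Polynomial.card_roots' f
    _ ≤ 2 ^ (l - 1) := hdeg
  have : (2 : ℕ) ^ (l - 1) < 2 ^ l := Nat.pow_lt_pow_right (by norm_num) (by omega)
  omega

lemma root_translate {k : ℕ} [CharP L 2] (x e b : L) (he : e ≠ 0)
    (hroot : x ^ (2 ^ k + 1) + x + b = 0) :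
    ((x + e) ^ (2 ^ k + 1) + (x + e) + b = 0) ↔
      (x ^ 2 ^ k + 1) * (e⁻¹) ^ 2 ^ k + x * e⁻¹ = 1 := by
  haveI : Fact (Nat.Prime 2) := ⟨Nat.prime_two⟩
  have htwo : (2 : L) = 0 := by exact_mod_cast CharP.cast_eq_zero L 2
  have heq : e ^ 2 ^ k ≠ 0 := pow_ne_zero _ he
  have hq : (x + e) ^ (2 ^ k + 1) = (x ^ 2 ^ k + e ^ 2 ^ k) * (x + e) := by
    rw [pow_succ, add_pow_char_pow]
  have hroot' : x ^ 2 ^ k * x + x + b = 0 := by rw [← pow_succ]; exact hroot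
  have hr : e ^ 2 ^ k * e * ((x ^ 2 ^ k + 1) * (e ^ 2 ^ k)⁻¹ + x * e⁻¹ + 1)
      = (x ^ 2 ^ k + 1) * e + x * e ^ 2 ^ k + e ^ 2 ^ k * e := by
    field_simp
  have key : (x + e) ^ (2 ^ k + 1) + (x + e) + b
      = e ^ 2 ^ k * e * ((x ^ 2 ^ k + 1) * (e⁻¹) ^ 2 ^ k + x * e⁻¹ + 1) := by
    rw [hq, inv_pow, hr]
    linear_combination hroot'
  constructor
  · intro hA
    have h0 : e ^ 2 ^ k * e * ((x ^ 2 ^ k + 1) * (e⁻¹) ^ 2 ^ k + x * e⁻¹ + 1) = 0 := by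
      rw [← key]; exact hA
    have hB := (mul_eq_zero.mp h0).resolve_left (mul_ne_zero heq he)
    linear_combination hB - htwo
  · intro hB
    rw [key, hB]
    linear_combination e ^ 2 ^ k * e * htwo

lemma tr_psi_zero {k l : ℕ} [CharP L 2] (hcard : Fintype.card L = 2 ^ l)
    (h x w : L) (hx : x * (h ^ 2 ^ k + h) = h) :
    tr l (h ^ 2 ^ k * ((x ^ 2 ^ k + 1) * w ^ 2 ^ k + x * w)) = 0 := by
  haveI : Fact (Nat.Prime 2) := ⟨Nat.prime_two⟩
  have htwo : (2 : L) = 0 := by exact_mod_cast CharP.cast_eq_zero L 2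
  have e1 : h ^ 2 ^ k * ((x ^ 2 ^ k + 1) * w ^ 2 ^ k + x * w)
      = (h * (x + 1) * w) ^ 2 ^ k + h ^ 2 ^ k * (x * w) := by
    rw [mul_pow, mul_pow, add_pow_char_pow, one_pow]
    ring
  rw [e1, tr_add, tr_pow_q hcard, ← tr_add]
  have e2 : h * (x + 1) * w + h ^ 2 ^ k * (x * w) = 0 := by
    linear_combination w * hx + h * w * htwo
  rw [e2, tr_zero]

lemma key_eq {k : ℕ} [CharP L 2] (h x : L) (hx : x * (h ^ 2 ^ k + h) = h) :
    (x ^ (2 ^ k + 1) + x) * (h ^ 2 ^ k + h) ^ (2 ^ k + 1) = h ^ ((2 ^ k) ^ 2 + 1) := by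
  haveI : Fact (Nat.Prime 2) := ⟨Nat.prime_two⟩
  have htwo : (2 : L) = 0 := by exact_mod_cast CharP.cast_eq_zero L 2
  have hxq : x ^ 2 ^ k * ((h ^ 2 ^ k) ^ 2 ^ k + h ^ 2 ^ k) = h ^ 2 ^ k := by
    rw [← add_pow_char_pow, ← mul_pow, hx]
  have e3 : h ^ ((2 ^ k) ^ 2 + 1) = (h ^ 2 ^ k) ^ 2 ^ k * h := by
    rw [show (2 ^ k) ^ 2 + 1 = 2 ^ k * 2 ^ k + 1 by ring, pow_succ, pow_mul]
  rw [pow_succ x, pow_succ (h ^ 2 ^ k + h), e3, add_pow_char_pow]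
  linear_combination (x ^ 2 ^ k * ((h ^ 2 ^ k) ^ 2 ^ k + h ^ 2 ^ k)
      + ((h ^ 2 ^ k) ^ 2 ^ k + h ^ 2 ^ k)) * hx + h * hxq + h ^ 2 ^ k * h * htwo

lemma exists_psi_eq_one {k l : ℕ} (hk : 0 < k) (hl : 0 < l) (hgcd : Nat.gcd k l = 1)
    (hcard : Fintype.card L = 2 ^ l) [CharP L 2] (x h : L)
    (hx0 : x ≠ 0) (hx1 : x ≠ 1) (hh0 : h ≠ 0)
    (hker : ∀ w : L, tr l (h ^ 2 ^ k * ((x ^ 2 ^ k + 1) * w ^ 2 ^ k + x * w)) = 0)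
    (htr : tr l (h ^ 2 ^ k) = 0) :
    ∃ w : L, (x ^ 2 ^ k + 1) * w ^ 2 ^ k + x * w = 1 := by
  haveI : Fact (Nat.Prime 2) := ⟨Nat.prime_two⟩
  have htwo : (2 : L) = 0 := by exact_mod_cast CharP.cast_eq_zero L 2
  set ψ : L → L := fun w => (x ^ 2 ^ k + 1) * w ^ 2 ^ k + x * w with hψ
  have hxq1 : x ^ 2 ^ k + 1 ≠ 0 := by
    intro hcon
    apply hx1
    refine eq_one_of_pow_q_eq_one hk hl hgcd hcard x ?_
    linear_combination hcon - htwo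
  obtain ⟨w0, hw00, hw0⟩ := exists_pow_q_eq hk hl hgcd hcard (x / (x ^ 2 ^ k + 1))
    (div_ne_zero hx0 hxq1)
  have hcancel : (x ^ 2 ^ k + 1) * (x / (x ^ 2 ^ k + 1) * w0) = x * w0 := by
    field_simp
  have h2 : (x ^ 2 ^ k + 1) * w0 ^ 2 ^ k = x * w0 := by rw [hw0]; exact hcancel
  have hψw0 : ψ w0 = 0 := by
    simp only [hψ]
    rw [hw0, hcancel]
    linear_combination x * w0 * htwo
  have hadd : ∀ u v : L, ψ (u + v) = ψ u + ψ v := by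
    intro u v
    simp only [hψ, add_pow_char_pow]
    ring
  have hlin : ∀ u v : L, ψ u = ψ v → ψ (u + v) = 0 := by
    intro u v huv
    rw [hadd, huv]
    linear_combination ψ v * htwo
  have hker0 : ∀ d : L, ψ d = 0 → d = 0 ∨ d = w0 := by
    intro d hd
    rcases eq_or_ne d 0 with h0 | h0
    · exact Or.inl h0
    · right
      simp only [hψ] at hd
      have h1 : (x ^ 2 ^ k + 1) * d ^ 2 ^ k = x * d := by
        linear_combination hd - x * d * htwo
      have h3 : d ^ 2 ^ k * w0 = w0 ^ 2 ^ k * d := by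
        apply mul_left_cancel₀ hxq1
        calc (x ^ 2 ^ k + 1) * (d ^ 2 ^ k * w0)
            = ((x ^ 2 ^ k + 1) * d ^ 2 ^ k) * w0 := by ring
          _ = x * d * w0 := by rw [h1]
          _ = ((x ^ 2 ^ k + 1) * w0 ^ 2 ^ k) * d := by rw [h2]; ring
          _ = (x ^ 2 ^ k + 1) * (w0 ^ 2 ^ k * d) := by ring
      exact frob_ratio_inj hk hl hgcd hcard d w0 h0 hw00 h3
  have hfib : ∀ u v : L, ψ v = ψ u ↔ v = u ∨ v = u + w0 := by
    intro u v
    constructor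
    · intro hvu
      rcases hker0 (v + u) (hlin v u hvu) with h0 | h0
      · left; linear_combination h0 - u * htwo
      · right; linear_combination h0 - u * htwo
    · intro hv
      rcases hv with h0 | h0
      · rw [h0]
      · rw [h0, hadd, hψw0, add_zero]
  have hw0ne : ∀ u : L, u ≠ u + w0 := by
    intro u hu
    apply hw00
    linear_combination - hu
  have himgcard : (Finset.univ.image ψ).card * 2 = 2 ^ l := by
    have hsum := Finset.card_eq_sum_card_image ψ (Finset.univ : Finset L)
    have hfibcard : ∀ a ∈ Finset.univ.image ψ,
        (Finset.univ.filter fun w => ψ w = a).card = 2 := by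
      intro a ha
      obtain ⟨u, -, hu⟩ := Finset.mem_image.mp ha
      have hfil : (Finset.univ.filter fun w => ψ w = a) = {u, u + w0} := by
        ext v
        simp only [Finset.mem_filter, Finset.mem_univ, true_and, Finset.mem_insert,
          Finset.mem_singleton]
        rw [← hu]
        exact hfib u v
      rw [hfil, Finset.card_insert_of_notMem (by simpa using hw0ne u),
        Finset.card_singleton]
    rw [Finset.sum_congr rfl hfibcard, Finset.sum_const, smul_eq_mul, Finset.card_univ,
      hcard] at hsum
    exact hsum.symm
  have hhq : h ^ 2 ^ k ≠ 0 := pow_ne_zero _ hh0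
  obtain ⟨t0, ht0⟩ := tr_exists_one hl hcard
  set a0 : L := (h ^ 2 ^ k)⁻¹ * t0 with ha0
  have ha0tr : tr l (h ^ 2 ^ k * a0) = 1 := by
    rw [ha0, mul_inv_cancel_left₀ hhq]
    exact ht0
  have hshift : ∀ c : L, tr l (h ^ 2 ^ k * (c + a0)) = tr l (h ^ 2 ^ k * c) + 1 := by
    intro c
    rw [mul_add, tr_add, ha0tr]
  set K := Finset.univ.filter fun c : L => tr l (h ^ 2 ^ k * c) = 0 with hK
  set K' := Finset.univ.filter fun c : L => ¬ (tr l (h ^ 2 ^ k * c) = 0) with hK'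
  have hKcard : K.card = K'.card := by
    apply Finset.card_bij (fun c _ => c + a0)
    · intro c hc
      simp only [hK, hK', Finset.mem_filter, Finset.mem_univ, true_and] at hc ⊢
      rw [hshift, hc, zero_add]
      exact one_ne_zero
    · intro c1 h1 c2 h2v hp
      exact add_right_cancel hp
    · intro c' hc'
      simp only [hK', Finset.mem_filter, Finset.mem_univ, true_and] at hc'
      refine ⟨c' + a0, ?_, ?_⟩
      · simp only [hK, Finset.mem_filter, Finset.mem_univ, true_and]
        rw [hshift]
        have := (tr_zero_or_one hcard (h ^ 2 ^ k * c')).resolve_left hc'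
        rw [this]
        linear_combination htwo
      · linear_combination a0 * htwo
  have hsplit : K.card + K'.card = 2 ^ l := by
    rw [hK, hK', Finset.card_filter_add_card_filter_not, Finset.card_univ, hcard]
  have hEK : Finset.univ.image ψ ⊆ K := by
    intro c hc
    obtain ⟨w, -, hw⟩ := Finset.mem_image.mp hc
    simp only [hK, Finset.mem_filter, Finset.mem_univ, true_and]
    rw [← hw]
    exact hker w
  have hEKeq : Finset.univ.image ψ = K :=
    Finset.eq_of_subset_of_card_le hEK (by omega)
  have h1K : (1 : L) ∈ K := by
    simp only [hK, Finset.mem_filter, Finset.mem_univ, true_and]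
    rw [mul_one]
    exact htr
  rw [← hEKeq] at h1K
  obtain ⟨w, -, hw⟩ := Finset.mem_image.mp h1K
  exact ⟨w, hw⟩

end OneRootAux

/-- Let L = F_{2^l}, q = 2^k, gcd(k,l) = 1, ρ(x) = x^{q²+1}/(x^q+x)^{q+1}.
Then x^{q+1} + x + b has exactly one root in L iff b = ρ(h) for a necessarily
unique h ∈ L \ F_2 with Tr(h) = 1. -/
theorem one_root_iff (k l : ℕ) (hk : 0 < k) (hl : 0 < l) (hgcd : Nat.gcd k l = 1)
    (L : Type) [Field L] [Fintype L] [DecidableEq L] (hcard : Fintype.card L = 2 ^ l)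
    (b : L) :
    (Finset.univ.filter fun x : L => x ^ (2 ^ k + 1) + x + b = 0).card = 1 ↔
      ∃! h : L, h ≠ 0 ∧ h ≠ 1 ∧ (∑ j ∈ Finset.range l, h ^ 2 ^ j) = 1 ∧
        b = h ^ ((2 ^ k) ^ 2 + 1) / (h ^ (2 ^ k) + h) ^ (2 ^ k + 1) := by
  haveI : CharP L 2 := OneRootAux.char_two hcard
  haveI : Fact (Nat.Prime 2) := ⟨Nat.prime_two⟩
  have htwo : (2 : L) = 0 := by exact_mod_cast CharP.cast_eq_zero L 2
  constructor
  · intro hcard1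
    obtain ⟨x, hx⟩ := Finset.card_eq_one.mp hcard1
    have hxroot : x ^ (2 ^ k + 1) + x + b = 0 := by
      have hmem : x ∈ Finset.univ.filter fun x : L => x ^ (2 ^ k + 1) + x + b = 0 :=
        hx ▸ Finset.mem_singleton_self x
      simpa using hmem
    have huniq : ∀ y : L, y ^ (2 ^ k + 1) + y + b = 0 → y = x := by
      intro y hy
      have hmem : y ∈ Finset.univ.filter fun x : L => x ^ (2 ^ k + 1) + x + b = 0 := by
        simp [hy]
      rw [hx] at hmem
      exact Finset.mem_singleton.mp hmem
    have hb0 : b ≠ 0 := by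
      intro hb
      have hz : (0 : L) ^ (2 ^ k + 1) + 0 + b = 0 := by
        rw [zero_pow (Nat.succ_ne_zero _), hb]; ring
      have ho : (1 : L) ^ (2 ^ k + 1) + 1 + b = 0 := by
        rw [one_pow, hb]; linear_combination htwo
      exact one_ne_zero ((huniq 1 ho).trans (huniq 0 hz).symm)
    have hx0 : x ≠ 0 := by
      intro h0
      apply hb0
      rw [h0, zero_pow (Nat.succ_ne_zero _)] at hxroot
      linear_combination hxroot
    have hx1 : x ≠ 1 := by
      intro h1
      apply hb0
      rw [h1, one_pow] at hxroot
      linear_combination hxroot - htwo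
    have hx1' : x + 1 ≠ 0 := fun hcon => hx1 (by linear_combination hcon - htwo)
    obtain ⟨h, hh0, hhq⟩ := OneRootAux.exists_pow_q_eq hk hl hgcd hcard ((x + 1) / x)
      (div_ne_zero hx1' hx0)
    have hh1 : h ≠ 1 := by
      intro hcon
      rw [hcon, one_pow, mul_one] at hhq
      have h2 := (div_eq_iff hx0).mp hhq.symm
      have h3 : (1 : L) = 0 := by linear_combination h2
      exact one_ne_zero h3
    have hhq' : h ^ 2 ^ k * x = (x + 1) * h := by
      rw [hhq]
      field_simp
    have hxs : x * (h ^ 2 ^ k + h) = h := by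
      linear_combination hhq' + x * h * htwo
    have hs0 : h ^ 2 ^ k + h ≠ 0 := by
      intro hcon
      apply hh0
      rw [← hxs, hcon, mul_zero]
    have hb : b = x ^ (2 ^ k + 1) + x := by
      linear_combination b * htwo - hxroot
    have hkey := OneRootAux.key_eq (k := k) h x hxs
    have hbrho : b = h ^ ((2 ^ k) ^ 2 + 1) / (h ^ (2 ^ k) + h) ^ (2 ^ k + 1) := by
      rw [eq_div_iff (pow_ne_zero _ hs0), hb]
      exact hkey
    have htr1 : OneRootAux.tr l h = 1 := by
      rcases OneRootAux.tr_zero_or_one hcard h with h0 | h1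
      · exfalso
        have htrq : OneRootAux.tr l (h ^ 2 ^ k) = 0 := by
          rw [OneRootAux.tr_pow_q hcard]; exact h0
        obtain ⟨w, hw⟩ := OneRootAux.exists_psi_eq_one hk hl hgcd hcard x h hx0 hx1 hh0
          (fun w => OneRootAux.tr_psi_zero hcard h x w hxs) htrq
        have hwne : w ≠ 0 := by
          intro h0'
          rw [h0'] at hw
          simp [zero_pow (Nat.two_pow_pos k).ne'] at hw
        have hroot2 := (OneRootAux.root_translate (k := k) x w⁻¹ b (inv_ne_zero hwne)
          hxroot).mpr (by rw [inv_inv]; exact hw)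
        have heq2 : x + w⁻¹ = x := huniq _ hroot2
        exact inv_ne_zero hwne (by linear_combination heq2)
      · exact h1
    refine ⟨h, ⟨hh0, hh1, htr1, hbrho⟩, ?_⟩
    rintro h' ⟨hh0', hh1', htr', hbrho'⟩
    have hs0' : h' ^ 2 ^ k + h' ≠ 0 := by
      intro hcon
      have hfix : h' ^ 2 ^ k = h' := by linear_combination hcon - h' * htwo
      rcases OneRootAux.eq_zero_or_one_of_frob_fixed hk hl hgcd hcard h' hfix with h0 | h0
      · exact hh0' h0
      · exact hh1' h0
    set x' := h' * (h' ^ 2 ^ k + h')⁻¹ with hx'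
    have hxs' : x' * (h' ^ 2 ^ k + h') = h' := by
      rw [hx', inv_mul_cancel_right₀ hs0']
    have hkey' := OneRootAux.key_eq (k := k) h' x' hxs'
    have hbv : b * (h' ^ 2 ^ k + h') ^ (2 ^ k + 1) = h' ^ ((2 ^ k) ^ 2 + 1) := by
      rw [hbrho']
      exact div_mul_cancel₀ _ (pow_ne_zero _ hs0')
    have h3 := mul_right_cancel₀ (pow_ne_zero _ hs0') (hkey'.trans hbv.symm)
    have hroot' : x' ^ (2 ^ k + 1) + x' + b = 0 := by
      linear_combination h3 + b * htwo
    have hxeq : x' = x := huniq x' hroot'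
    rw [hxeq] at hxs'
    have e1 : h' ^ 2 ^ k * x = (x + 1) * h' := by
      linear_combination hxs' - x * h' * htwo
    have e2 : h ^ 2 ^ k * x = (x + 1) * h := by
      linear_combination hxs - x * h * htwo
    have e3 : h' ^ 2 ^ k * h = h ^ 2 ^ k * h' := by
      apply mul_left_cancel₀ hx0
      calc x * (h' ^ 2 ^ k * h) = (h' ^ 2 ^ k * x) * h := by ring
        _ = ((x + 1) * h') * h := by rw [e1]
        _ = ((x + 1) * h) * h' := by ring
        _ = (h ^ 2 ^ k * x) * h' := by rw [e2]
        _ = x * (h ^ 2 ^ k * h') := by ring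
    exact OneRootAux.frob_ratio_inj hk hl hgcd hcard h' h hh0' hh0 e3
  · rintro ⟨h, ⟨hh0, hh1, htr, hbrho⟩, -⟩
    have htr1 : OneRootAux.tr l h = 1 := htr
    have hs0 : h ^ 2 ^ k + h ≠ 0 := by
      intro hcon
      have hfix : h ^ 2 ^ k = h := by linear_combination hcon - h * htwo
      rcases OneRootAux.eq_zero_or_one_of_frob_fixed hk hl hgcd hcard h hfix with h0 | h0
      · exact hh0 h0
      · exact hh1 h0
    set x := h * (h ^ 2 ^ k + h)⁻¹ with hxdef
    have hxs : x * (h ^ 2 ^ k + h) = h := by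
      rw [hxdef, inv_mul_cancel_right₀ hs0]
    have hkey := OneRootAux.key_eq (k := k) h x hxs
    have hbv : b * (h ^ 2 ^ k + h) ^ (2 ^ k + 1) = h ^ ((2 ^ k) ^ 2 + 1) := by
      rw [hbrho]
      exact div_mul_cancel₀ _ (pow_ne_zero _ hs0)
    have h3 := mul_right_cancel₀ (pow_ne_zero _ hs0) (hkey.trans hbv.symm)
    have hxroot : x ^ (2 ^ k + 1) + x + b = 0 := by
      linear_combination h3 + b * htwo
    have hx0 : x ≠ 0 := by
      intro hc
      apply hh0
      rw [← hxs, hc, zero_mul]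
    have huniqroot : ∀ y : L, y ^ (2 ^ k + 1) + y + b = 0 → y = x := by
      intro y hy
      by_contra hne
      have he : y - x ≠ 0 := sub_ne_zero.mpr hne
      have hroot2 : (x + (y - x)) ^ (2 ^ k + 1) + (x + (y - x)) + b = 0 := by
        rw [show x + (y - x) = y by ring]
        exact hy
      have hB := (OneRootAux.root_translate (k := k) x (y - x) b he hxroot).mp hroot2
      have hz := OneRootAux.tr_psi_zero (k := k) hcard h x (y - x)⁻¹ hxs
      rw [hB, mul_one] at hz
      have htrq : OneRootAux.tr l (h ^ 2 ^ k) = 1 := by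
        rw [OneRootAux.tr_pow_q hcard]; exact htr1
      rw [hz] at htrq
      exact zero_ne_one htrq
    have hfil : (Finset.univ.filter fun x : L => x ^ (2 ^ k + 1) + x + b = 0) = {x} := by
      ext y
      simp only [Finset.mem_filter, Finset.mem_univ, true_and, Finset.mem_singleton]
      constructor
      · exact huniqroot y
      · intro hyx
        rw [hyx]
        exact hxroot
    rw [hfil, Finset.card_singleton]
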